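/- Let n ≥ r ≥ 2 and let A be an n×n complex r-partite matrix with all entries of absolute value at most 1. If the trace norm of A equals n^(3/2) · sqrt(1 - 1/r), then all n singular values of A are equal to sqrt((1 - 1/r)·n). -/

import Mathlib

open Matrix BigOperators Kronecker

/-- The singular values of a square matrix `A` over an `RCLike` field: the square roots of the
eigenvalues of the Hermitian matrix `A * Aᴴ`. -/
noncomputable def singularValues {𝕜 : Type*} [RCLike 𝕜] {m : Type*} [Fintype m] [DecidableEq m]
    (A : Matrix m m 𝕜) : m → ℝ :=
  fun i => Real.sqrt ((Matrix.isHermitian_mul_conjTranspose_self A).eigenvalues i)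

/-- The trace norm (nuclear norm) of a square matrix: the sum of its singular values. -/
noncomputable def traceNorm {𝕜 : Type*} [RCLike 𝕜] {m : Type*} [Fintype m] [DecidableEq m]
    (A : Matrix m m 𝕜) : ℝ :=
  ∑ i, singularValues A i

open Finset
open scoped ComplexOrder

/-- The trace of a Hermitian complex matrix is the sum of its eigenvalues. -/
lemma trace_eq_sum_eigenvalues_aux {m : Type*} [Fintype m] [DecidableEq m] {A : Matrix m m ℂ}
    (hA : A.IsHermitian) : A.trace = ↑(∑ i, hA.eigenvalues i) := by
  conv_lhs => rw [hA.spectral_theorem]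
  rw [Unitary.conjStarAlgAut_apply]
  rw [Matrix.trace_mul_cycle,
    (Matrix.mem_unitaryGroup_iff'.mp (hA.eigenvectorUnitary).2), one_mul, trace_diagonal]
  push_cast
  rfl

/-- Sum of squared singular values is the squared Frobenius norm. -/
lemma sum_sq_singularValues_aux {m : Type*} [Fintype m] [DecidableEq m] (A : Matrix m m ℂ) :
    ∑ i, singularValues A i ^ 2 = ∑ i, ∑ j, Complex.normSq (A i j) := by
  have hH := Matrix.isHermitian_mul_conjTranspose_self A
  have h1 : ∀ i, singularValues A i ^ 2 = hH.eigenvalues i := fun i =>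
    Real.sq_sqrt ((Matrix.posSemidef_self_mul_conjTranspose A).eigenvalues_nonneg i)
  have h2 : (A * Aᴴ).trace = ↑(∑ i, ∑ j, Complex.normSq (A i j)) := by
    rw [Matrix.trace]
    push_cast
    refine Finset.sum_congr rfl fun i _ => ?_
    simp only [Matrix.diag_apply, Matrix.mul_apply, Matrix.conjTranspose_apply]
    exact Finset.sum_congr rfl fun j _ => (Complex.mul_conj _)
  have h3 := trace_eq_sum_eigenvalues_aux hH
  rw [h2] at h3
  have h4 := Complex.ofReal_injective h3.symm
  rw [← h4]
  exact Finset.sum_congr rfl fun i _ => h1 i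

/-- Frobenius bound for `r`-partite matrices with entries of modulus at most 1. -/
lemma frobenius_bound_aux {n r : ℕ} (hr : 2 ≤ r) (p : Fin n → Fin r)
    (A : Matrix (Fin n) (Fin n) ℂ)
    (hbd : ∀ i j, ‖A i j‖ ≤ 1)
    (hpart : ∀ i j, p i = p j → A i j = 0) :
    ∑ i, ∑ j, Complex.normSq (A i j) ≤ (n:ℝ)^2 * (1 - 1/r) := by
  have hr0 : (0:ℝ) < r := by positivity
  set c : Fin r → ℝ := fun k => ∑ j, if p j = k then (1:ℝ) else 0 with hc
  have hcsum : ∑ k, c k = n := by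
    rw [Finset.sum_comm]
    simp [Finset.sum_ite_eq]
  have hstep : ∀ i j, Complex.normSq (A i j) ≤ if p i = p j then (0:ℝ) else 1 := by
    intro i j
    by_cases h : p i = p j
    · simp [h, hpart i j h]
    · simp only [h, if_false]
      calc Complex.normSq (A i j) = ‖A i j‖ ^ 2 := (Complex.sq_norm _).symm
        _ ≤ 1 ^ 2 := by
            have := hbd i j
            nlinarith [norm_nonneg (A i j)]
        _ = 1 := one_pow 2
  have h1 : ∑ i, ∑ j, Complex.normSq (A i j) ≤
      ∑ i, ∑ j, (if p i = p j then (0:ℝ) else 1) :=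
    Finset.sum_le_sum fun i _ => Finset.sum_le_sum fun j _ => hstep i j
  have h2 : ∑ i, ∑ j, (if p i = p j then (0:ℝ) else 1) = (n:ℝ)^2 - ∑ k, c k ^ 2 := by
    have e1 : ∀ (i : Fin n), ∑ j, (if p i = p j then (0:ℝ) else 1)
        = (n:ℝ) - c (p i) := by
      intro i
      have : ∀ j, (if p i = p j then (0:ℝ) else 1) = 1 - (if p j = p i then (1:ℝ) else 0) := by
        intro j
        rcases eq_or_ne (p i) (p j) with h | h
        · rw [if_pos h, if_pos h.symm]; ring
        · rw [if_neg h, if_neg (Ne.symm h)]; ring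
      simp only [this, Finset.sum_sub_distrib, Finset.sum_const, Finset.card_univ,
        Fintype.card_fin, nsmul_eq_mul, mul_one]
      rfl
    have e2 : ∑ i, c (p i) = ∑ k, c k ^ 2 := by
      have : ∀ (i : Fin n), c (p i) = ∑ k, if p i = k then c k else 0 := by
        intro i; rw [Finset.sum_ite_eq]; simp
      simp only [this]
      rw [Finset.sum_comm]
      refine Finset.sum_congr rfl fun k _ => ?_
      have : ∀ i : Fin n, (if p i = k then c k else 0) = (if p i = k then (1:ℝ) else 0) * c k := by
        intro i; by_cases h : p i = k <;> simp [h]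
      simp only [this, ← Finset.sum_mul]
      have : (∑ i, if p i = k then (1:ℝ) else 0) = c k := rfl
      rw [this]; ring
    simp only [e1, Finset.sum_sub_distrib, Finset.sum_const, Finset.card_univ, Fintype.card_fin,
      nsmul_eq_mul, e2]
    ring
  have h3 : (n:ℝ)^2 ≤ r * ∑ k, c k ^ 2 := by
    have := sq_sum_le_card_mul_sum_sq (s := (Finset.univ : Finset (Fin r))) (f := c)
    rw [hcsum] at this
    simpa using this
  have h4 : (n:ℝ)^2 / r ≤ ∑ k, c k ^ 2 := by
    rw [div_le_iff₀ hr0]; linarith [h3]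
  calc ∑ i, ∑ j, Complex.normSq (A i j) ≤ (n:ℝ)^2 - ∑ k, c k ^ 2 := by rw [← h2]; exact h1
    _ ≤ (n:ℝ)^2 - (n:ℝ)^2/r := by linarith
    _ = (n:ℝ)^2 * (1 - 1/r) := by field_simp

/-- equality case of the trace-norm bound: all singular values equal
`√((1 - 1/r) n)`. -/
theorem singularValues_of_traceNorm_eq {n r : ℕ} (hr : 2 ≤ r) (hn : r ≤ n)
    (A : Matrix (Fin n) (Fin n) ℂ)
    (hbd : ∀ i j, ‖A i j‖ ≤ 1)
    (p : Fin n → Fin r)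
    (hpart : ∀ i j, p i = p j → A i j = 0)
    (heq : traceNorm A = (n : ℝ) ^ (3 / 2 : ℝ) * Real.sqrt (1 - 1 / r)) :
    ∀ i, singularValues A i = Real.sqrt ((1 - 1 / r) * n) := by
  have hn0 : (0:ℝ) < n := by
    have : 0 < n := lt_of_lt_of_le (by omega) hn
    exact_mod_cast this
  have hr0 : (0:ℝ) < r := by positivity
  have h1r : (0:ℝ) ≤ 1 - 1/r := by
    have : (1:ℝ)/r ≤ 1 := by
      rw [div_le_one hr0]
      exact_mod_cast le_trans (by omega) hr
    linarith
  set σ : Fin n → ℝ := singularValues A with hσdef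
  have hσnn : ∀ i, 0 ≤ σ i := fun i => Real.sqrt_nonneg _
  have hsum2 : ∑ i, σ i ^ 2 ≤ (n:ℝ)^2 * (1 - 1/r) := by
    rw [hσdef, sum_sq_singularValues_aux A]
    exact frobenius_bound_aux hr p A hbd hpart
  have hS : ∑ i, σ i = (n:ℝ) ^ (3/2 : ℝ) * Real.sqrt (1 - 1/r) := heq
  have hSnn : (0:ℝ) ≤ ∑ i, σ i := Finset.sum_nonneg fun i _ => hσnn i
  have h32 : ((n:ℝ) ^ (3/2:ℝ))^2 = (n:ℝ)^3 := by
    rw [← Real.rpow_natCast ((n:ℝ)^(3/2:ℝ)) 2, ← Real.rpow_mul hn0.le,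
      ← Real.rpow_natCast (n:ℝ) 3]
    norm_num
  have hSq : (∑ i, σ i)^2 = (n:ℝ)^3 * (1 - 1/r) := by
    rw [hS, mul_pow, Real.sq_sqrt h1r, h32]
  set μ : ℝ := Real.sqrt ((1 - 1/r) * n) with hμdef
  have hμnn : 0 ≤ μ := Real.sqrt_nonneg _
  have hμsq : μ^2 = (1 - 1/r) * n := Real.sq_sqrt (by positivity)
  have hsumμ : ∑ i, σ i = n * μ := by
    have hsq : ((n:ℝ) * μ)^2 = (∑ i, σ i)^2 := by
      rw [mul_pow, hμsq, hSq]; ring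
    have := congrArg Real.sqrt hsq
    rwa [Real.sqrt_sq (by positivity), Real.sqrt_sq hSnn, eq_comm] at this
  have hnμ : (n:ℝ) * μ^2 = (n:ℝ)^2 * (1 - 1/r) := by rw [hμsq]; ring
  have key : ∑ i, (σ i - μ)^2 ≤ 0 := by
    have expand : ∑ i, (σ i - μ)^2
        = ∑ i, σ i ^ 2 - 2*μ*(∑ i, σ i) + (n:ℝ)*μ^2 := by
      have e : ∀ i : Fin n, (σ i - μ)^2 = σ i ^ 2 - (2*μ) * σ i + μ^2 := fun i => by ring
      simp only [e, Finset.sum_add_distrib, Finset.sum_sub_distrib, ← Finset.mul_sum,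
        Finset.sum_const, Finset.card_univ, Fintype.card_fin, nsmul_eq_mul]
    rw [expand, hsumμ]
    nlinarith [hsum2, hnμ]
  have each0 : ∀ i ∈ Finset.univ, (σ i - μ)^2 = 0 := by
    rw [← Finset.sum_eq_zero_iff_of_nonneg (fun i _ => sq_nonneg (σ i - μ))]
    exact le_antisymm key (Finset.sum_nonneg fun i _ => sq_nonneg _)
  intro i
  have h := each0 i (Finset.mem_univ i)
  have : σ i - μ = 0 := by
    exact pow_eq_zero_iff (two_ne_zero) |>.mp h
  have : σ i = μ := by linarith
  exact this
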